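/- For every n ≥ 1 and every k with 0 ≤ k ≤ n, the number of labeled plane trees with n edges having exactly k improper edges equals binom(n, k) · (2n-1)!!. -/

import Mathlib

/-- A plane tree with labeled vertices: a root label together with an ordered
list of child subtrees.  (A plane tree is a rooted tree in which the children
of each node are linearly ordered.) -/
inductive LTree : Type where
  | node : ℕ → List LTree → LTree

namespace LTree

/-- The label of the root. -/
def rootLabel : LTree → ℕ
  | node a _ => a

/-- The list of child subtrees of the root. -/
def children : LTree → List LTree
  | node _ cs => cs

/-- `deg_T(root)`: the number of children of the root. -/
def rootDeg (t : LTree) : ℕ := (children t).length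

mutual
  /-- The list of all vertex labels of a tree. -/
  def labels : LTree → List ℕ
    | node a cs => a :: labelsList cs
  /-- The list of all vertex labels of a forest. -/
  def labelsList : List LTree → List ℕ
    | [] => []
    | c :: rest => labels c ++ labelsList rest
end

/-- `β(v)`: the smallest label occurring in the subtree `t` rooted at `v`. -/
def minLabel (t : LTree) : ℕ := (labels t).foldr min (rootLabel t)

/-- `min { j, β(c₁), …, β(cₖ) }` for a vertex `j` and a list of subtrees `c₁, …, cₖ`. -/
def minOver (j : ℕ) (rest : List LTree) : ℕ := (rest.map minLabel).foldr min j

mutual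
  /-- The list of edges of a tree, each recorded as a (parent label, child label)
  pair, in depth-first order. -/
  def edgeList : LTree → List (ℕ × ℕ)
    | node a cs => edgeListAux a cs
  def edgeListAux : ℕ → List LTree → List (ℕ × ℕ)
    | _, [] => []
    | a, c :: rest => (a, rootLabel c) :: (edgeList c ++ edgeListAux a rest)
end

mutual
  /-- The list of improper edges of a tree: if a vertex `j` has children
  `j₁, …, jₖ` (ordered left to right), the edge `(j, jᵢ)` is improper when
  `β(jᵢ) < min { j, β(j_{i+1}), …, β(jₖ) }`. -/
  def improperEdges : LTree → List (ℕ × ℕ)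
    | node a cs => improperEdgesAux a cs
  def improperEdgesAux : ℕ → List LTree → List (ℕ × ℕ)
    | _, [] => []
    | j, c :: rest =>
        (if minLabel c < minOver j rest then [(j, rootLabel c)] else [])
          ++ improperEdges c ++ improperEdgesAux j rest
end

mutual
  /-- The list of proper (i.e. non-improper) edges of a tree. -/
  def properEdges : LTree → List (ℕ × ℕ)
    | node a cs => properEdgesAux a cs
  def properEdgesAux : ℕ → List LTree → List (ℕ × ℕ)
    | _, [] => []
    | j, c :: rest =>
        (if minLabel c < minOver j rest then [] else [(j, rootLabel c)])
          ++ properEdges c ++ properEdgesAux j rest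
end

/-- `impr T`: the number of improper edges of `T`. -/
def impr (t : LTree) : ℕ := (improperEdges t).length

/-- `prop T`: the number of proper edges of `T`. -/
def propCount (t : LTree) : ℕ := (properEdges t).length

/-- The number of edges of `T`. -/
def edgeCount (t : LTree) : ℕ := (edgeList t).length

/-- `T` is a labeled plane tree with `n` edges: its `n + 1` vertices are labeled
bijectively with `{1, 2, …, n + 1}`. -/
def IsLPT (n : ℕ) (t : LTree) : Prop := (labels t).Perm (List.range' 1 (n + 1))

/-- `T` is increasing: vertex labels increase along every path from the root. -/
inductive Increasing : LTree → Prop where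
  | node (a : ℕ) (cs : List LTree) :
      (∀ c ∈ cs, a < rootLabel c) → (∀ c ∈ cs, Increasing c) → Increasing (node a cs)

end LTree

namespace LTree

-- ==== part 1: basic lemmas ====

lemma labels_node (a : ℕ) (cs : List LTree) : labels (node a cs) = a :: labelsList cs := by
  simp [labels]

lemma node_eta (t : LTree) : node (rootLabel t) (children t) = t := by
  cases t; rfl

lemma labels_eq (t : LTree) : labels t = rootLabel t :: labelsList (children t) := by
  cases t; simp [labels, rootLabel, children]

lemma labels_ne_nil (t : LTree) : labels t ≠ [] := by
  rw [labels_eq]; simp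

lemma rootLabel_mem_labels (t : LTree) : rootLabel t ∈ labels t := by
  rw [labels_eq]; exact List.mem_cons_self

lemma mem_labelsList {x : ℕ} {cs : List LTree} :
    x ∈ labelsList cs ↔ ∃ t ∈ cs, x ∈ labels t := by
  induction cs with
  | nil => simp [labelsList]
  | cons c rest ih => simp [labelsList, ih]

lemma labelsList_eq_nil {cs : List LTree} : labelsList cs = [] ↔ cs = [] := by
  cases cs with
  | nil => simp [labelsList]
  | cons c rest =>
      simp [labelsList]
      intro h
      exact absurd h (labels_ne_nil c)

-- foldr min lemmas
lemma foldr_min_le_init (l : List ℕ) (x : ℕ) : l.foldr min x ≤ x := by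
  induction l with
  | nil => simp
  | cons a l ih => exact le_trans (min_le_right _ _) ih

lemma foldr_min_le_mem {l : List ℕ} {y : ℕ} (x : ℕ) (hy : y ∈ l) : l.foldr min x ≤ y := by
  induction l with
  | nil => simp at hy
  | cons a l ih =>
      rcases List.mem_cons.1 hy with rfl | hy
      · exact min_le_left _ _
      · exact le_trans (min_le_right _ _) (ih hy)

lemma foldr_min_mem (l : List ℕ) (x : ℕ) : l.foldr min x = x ∨ l.foldr min x ∈ l := by
  induction l with
  | nil => simp
  | cons a l ih =>
      simp only [List.foldr]
      rcases le_total a (l.foldr min x) with h | h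
      · right; simp [min_eq_left h]
      · rw [min_eq_right h]
        rcases ih with h' | h'
        · left; exact h'
        · right; exact List.mem_cons_of_mem _ h'

lemma minLabel_mem (t : LTree) : minLabel t ∈ labels t := by
  rcases foldr_min_mem (labels t) (rootLabel t) with h | h
  · rw [minLabel, h]; exact rootLabel_mem_labels t
  · exact h

lemma minLabel_le {t : LTree} {y : ℕ} (hy : y ∈ labels t) : minLabel t ≤ y :=
  foldr_min_le_mem _ hy

lemma minOver_le_self (j : ℕ) (cs : List LTree) : minOver j cs ≤ j :=
  foldr_min_le_init _ _

lemma minOver_le {j : ℕ} {cs : List LTree} {t : LTree} {y : ℕ}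
    (ht : t ∈ cs) (hy : y ∈ labels t) : minOver j cs ≤ y :=
  le_trans (foldr_min_le_mem _ (List.mem_map_of_mem (f := minLabel) ht)) (minLabel_le hy)

lemma minOver_mem (j : ℕ) (cs : List LTree) :
    minOver j cs = j ∨ ∃ t ∈ cs, minOver j cs ∈ labels t := by
  rcases foldr_min_mem (cs.map minLabel) j with h | h
  · exact Or.inl h
  · right
    rcases List.mem_map.1 h with ⟨t, ht, h'⟩
    refine ⟨t, ht, ?_⟩
    show List.foldr min j (cs.map minLabel) ∈ _
    rw [← h']
    exact minLabel_mem t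

lemma impr_node_cons (a : ℕ) (c : LTree) (cs : List LTree) :
    impr (node a (c :: cs)) =
      ((if minLabel c < minOver a cs then 1 else 0) + impr c) + impr (node a cs) := by
  simp only [impr, improperEdges, improperEdgesAux, List.length_append]
  rcases lt_or_ge (minLabel c) (minOver a cs) with h | h
  · simp only [if_pos h]; simp
  · simp only [if_neg (not_lt.2 h)]; simp

end LTree

-- ==== part 2: prepend, multiset labels, condition characterization ====
namespace LTree

/-- labels as a multiset -/
def labelsM (t : LTree) : Multiset ℕ := (labels t : Multiset ℕ)

def labelsListM (cs : List LTree) : Multiset ℕ := (labelsList cs : Multiset ℕ)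

lemma labelsM_node (a : ℕ) (cs : List LTree) :
    labelsM (node a cs) = a ::ₘ labelsListM cs := by
  simp [labelsM, labelsListM, labels_node]

lemma labelsListM_cons (c : LTree) (cs : List LTree) :
    labelsListM (c :: cs) = labelsM c + labelsListM cs := by
  simp [labelsM, labelsListM, labelsList]

def prepend (c : LTree) : LTree → LTree
  | node a cs => node a (c :: cs)

lemma prepend_node (c : LTree) (a : ℕ) (cs : List LTree) :
    prepend c (node a cs) = node a (c :: cs) := rfl

lemma labelsM_prepend (c t : LTree) :
    labelsM (prepend c t) = labelsM c + labelsM t := by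
  cases t with
  | node a cs =>
      rw [prepend_node, labelsM_node, labelsListM_cons, labelsM_node]
      simp [Multiset.cons_swap]

lemma impr_prepend (c t : LTree) :
    impr (prepend c t) =
      ((if minLabel c < minOver (rootLabel t) (children t) then 1 else 0) + impr c) + impr t := by
  cases t with
  | node a cs => rw [prepend_node, impr_node_cons]; rfl

/-- The key characterization: the root edge to the prepended first child is improper
iff the prepended subtree contains the global minimum label. -/
lemma cond_iff {c t : LTree} {M : ℕ}
    (hnd : (labels (prepend c t)).Nodup)
    (hM : M ∈ labels (prepend c t))
    (hmin : ∀ y ∈ labels (prepend c t), M ≤ y) :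
    (minLabel c < minOver (rootLabel t) (children t) ↔ M ∈ labels c) := by
  cases t with
  | node a cs =>
    rw [prepend_node] at *
    simp only [rootLabel, children]
    rw [labels_node] at hnd hM hmin
    simp only [labelsList] at hnd hM hmin
    -- hnd : (a :: (labels c ++ labelsList cs)).Nodup
    have hna : a ∉ labels c ++ labelsList cs := (List.nodup_cons.1 hnd).1
    have hnd2 := (List.nodup_cons.1 hnd).2
    have hdisj : ∀ x ∈ labels c, x ∉ labelsList cs := by
      intro x hx
      exact (List.disjoint_of_nodup_append hnd2) hx
    constructor
    · intro hlt
      by_contra hMc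
      -- M = a or M ∈ labelsList cs; in both cases minOver a cs ≤ M
      have hMo : minOver a cs ≤ M := by
        rcases List.mem_cons.1 hM with rfl | hM'
        · exact minOver_le_self _ _
        · rcases List.mem_append.1 hM' with h | h
          · exact absurd h hMc
          · rcases mem_labelsList.1 h with ⟨u, hu, hxu⟩
            exact minOver_le hu hxu
      have : M ≤ minLabel c := hmin _ (List.mem_cons_of_mem _ (List.mem_append_left _ (minLabel_mem c)))
      omega
    · intro hMc
      have hMc' : minLabel c = M := le_antisymm (minLabel_le hMc)
        (hmin _ (List.mem_cons_of_mem _ (List.mem_append_left _ (minLabel_mem c))))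
      rw [hMc']
      rcases minOver_mem a cs with h | ⟨u, hu, hx⟩
      · rw [h]
        rcases lt_or_eq_of_le (hmin a List.mem_cons_self) with h' | h'
        · exact h'
        · exfalso; exact hna (h' ▸ List.mem_append_left _ hMc)
      · have h1 : M ≤ minOver a cs := hmin _ (List.mem_cons_of_mem _
          (List.mem_append_right _ (mem_labelsList.2 ⟨u, hu, hx⟩)))
        rcases lt_or_eq_of_le h1 with h' | h'
        · exact h'
        · exfalso
          exact hdisj M hMc (h' ▸ mem_labelsList.2 ⟨u, hu, hx⟩)

end LTree

-- ==== part 3: finiteness ====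
namespace LTree

lemma labelsM_ne_zero (t : LTree) : labelsM t ≠ 0 := by
  simp only [labelsM, ne_eq, Multiset.coe_eq_zero]
  exact labels_ne_nil t

lemma labelsListM_nil : labelsListM ([] : List LTree) = 0 := rfl

lemma labelsM_eq (t : LTree) : labelsM t = rootLabel t ::ₘ labelsListM (children t) := by
  simp [labelsM, labelsListM, labels_eq t]

def headTree : List LTree → LTree
  | [] => node 0 []
  | c :: _ => c

def tailF : List LTree → List LTree
  | [] => []
  | _ :: r => r

lemma forest_decomp {s : Finset ℕ} (hne : s.Nonempty) (cs : List LTree)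
    (h : labelsListM cs = s.val) :
    cs = headTree cs :: tailF cs ∧
    labelsM (headTree cs) = ((labels (headTree cs)).toFinset).val ∧
    (labels (headTree cs)).toFinset ⊆ s ∧
    ((labels (headTree cs)).toFinset).Nonempty ∧
    labelsListM (tailF cs) = (s \ (labels (headTree cs)).toFinset).val := by
  cases cs with
  | nil =>
      exfalso
      rw [labelsListM_nil] at h
      rcases hne with ⟨a, ha⟩
      have : a ∈ s.val := ha
      rw [← h] at this
      simp at this
  | cons c rest =>
      simp only [headTree, tailF]
      rw [labelsListM_cons] at h
      have hle : labelsM c ≤ s.val := h ▸ Multiset.le_add_right _ _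
      have hnd : (labelsM c).Nodup := Multiset.nodup_of_le hle s.nodup
      have hA : ((labels c).toFinset).val = labelsM c := by
        have : (labels c).toFinset = (labelsM c).toFinset := rfl
        rw [this, Multiset.toFinset_val, Multiset.Nodup.dedup hnd]
      refine ⟨trivial, hA.symm, ?_, ?_, ?_⟩
      · intro x hx
        rw [List.mem_toFinset] at hx
        have hm : x ∈ labelsM c := by
          simpa [labelsM, Multiset.mem_coe] using hx
        exact Finset.mem_def.2 (Multiset.mem_of_le hle hm)
      · exact ⟨rootLabel c, by simp [List.mem_toFinset]; exact rootLabel_mem_labels c⟩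
      · rw [Finset.sdiff_val, hA, ← h, add_tsub_cancel_left]

theorem fin_aux : ∀ (N : ℕ) (s : Finset ℕ),
    (2 * s.card ≤ N → Finite {t : LTree // labelsM t = s.val}) ∧
    (2 * s.card + 1 ≤ N → Finite {cs : List LTree // labelsListM cs = s.val}) := by
  intro N
  induction N with
  | zero =>
      intro s
      constructor
      · intro h
        have : s.card = 0 := by omega
        have hs : s = ∅ := Finset.card_eq_zero.1 this
        subst hs
        refine @Finite.of_subsingleton _ ⟨fun x y => absurd x.2 ?_⟩
        exact fun hx => labelsM_ne_zero x.1 (by simpa using hx)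
      · intro h; omega
  | succ N ih =>
      intro s
      constructor
      · -- trees
        intro hN
        rcases eq_or_ne s ∅ with rfl | hne
        · refine @Finite.of_subsingleton _ ⟨fun x y => absurd x.2 ?_⟩
          exact fun hx => labelsM_ne_zero x.1 (by simpa using hx)
        · have hcard : 1 ≤ s.card := Finset.card_pos.2 (Finset.nonempty_of_ne_empty hne)
          haveI hfib : ∀ a : {a // a ∈ s}, Finite
              {cs : List LTree // labelsListM cs = (s.erase a.1).val} := by
            intro a
            refine (ih (s.erase a.1)).2 ?_
            rw [Finset.card_erase_of_mem a.2]
            omega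
          haveI : Finite (Σ a : {a // a ∈ s},
              {cs : List LTree // labelsListM cs = (s.erase a.1).val}) := by
            infer_instance
          refine Finite.of_injective (fun x =>
            (⟨⟨rootLabel x.1, by
                have hm : rootLabel x.1 ∈ labelsM x.1 := by
                  simp only [labelsM, Multiset.mem_coe]
                  exact rootLabel_mem_labels x.1
                rw [x.2] at hm
                exact hm⟩,
              ⟨children x.1, by
                have h1 : labelsM x.1 = rootLabel x.1 ::ₘ labelsListM (children x.1) :=
                  labelsM_eq x.1
                rw [x.2] at h1
                have key : ∀ (L : Multiset ℕ),
                    L = rootLabel x.1 ::ₘ labelsListM (children x.1) →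
                    L.erase (rootLabel x.1) = labelsListM (children x.1) := by
                  intro L hL
                  rw [hL, Multiset.erase_cons_head]
                have h2 := key s.val h1
                rw [Finset.erase_val]
                exact h2.symm⟩⟩ : Σ a : {a // a ∈ s},
              {cs : List LTree // labelsListM cs = (s.erase a.1).val})) ?_
          intro x y h
          have h1 : rootLabel x.1 = rootLabel y.1 :=
            congrArg (fun z => (Sigma.fst z).1) h
          have h2 : children x.1 = children y.1 :=
            congrArg (fun (z : Σ a : {a // a ∈ s},
              {cs : List LTree // labelsListM cs = (s.erase a.1).val}) => z.2.1) h
          apply Subtype.ext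
          rw [← node_eta x.1, ← node_eta y.1, h1, h2]
      · -- forests
        intro hN
        rcases eq_or_ne s ∅ with rfl | hne
        · refine @Finite.of_subsingleton _ ⟨fun x y => ?_⟩
          have key : ∀ z : {cs : List LTree // labelsListM cs = (∅ : Finset ℕ).val},
              z.1 = [] := by
            intro z
            cases hc : z.1 with
            | nil => rfl
            | cons c rest =>
                exfalso
                have hz := z.2
                rw [hc, labelsListM_cons] at hz
                simp only [Finset.empty_val] at hz
                have hr := rootLabel_mem_labels c
                have : rootLabel c ∈ labelsM c + labelsListM rest := by
                  apply Multiset.mem_add.2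
                  left
                  simpa [labelsM, Multiset.mem_coe] using hr
                rw [hz] at this
                simp at this
          exact Subtype.ext ((key x).trans (key y).symm)
        · have hsne : s.Nonempty := Finset.nonempty_of_ne_empty hne
          have hcard : 1 ≤ s.card := Finset.card_pos.2 hsne
          haveI hI : Finite {A : Finset ℕ // A ⊆ s ∧ A.Nonempty} := by
            refine Finite.of_injective
              (fun A => (⟨A.1, Finset.mem_powerset.2 A.2.1⟩ : {A // A ∈ s.powerset})) ?_
            intro a b h
            exact Subtype.ext (congrArg (fun (z : {A // A ∈ s.powerset}) => z.1) h)
          haveI hfib : ∀ A : {A : Finset ℕ // A ⊆ s ∧ A.Nonempty},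
              Finite ({t : LTree // labelsM t = A.1.val} ×
                {cs : List LTree // labelsListM cs = (s \ A.1).val}) := by
            intro A
            haveI h1 : Finite {t : LTree // labelsM t = A.1.val} := by
              refine (ih A.1).1 ?_
              have := Finset.card_le_card A.2.1
              omega
            haveI h2 : Finite {cs : List LTree // labelsListM cs = (s \ A.1).val} := by
              refine (ih (s \ A.1)).2 ?_
              have h3 : (s \ A.1).card = s.card - A.1.card := Finset.card_sdiff_of_subset A.2.1
              have h4 : 1 ≤ A.1.card := Finset.card_pos.2 A.2.2
              omega
            infer_instance
          haveI : Finite (Σ A : {A : Finset ℕ // A ⊆ s ∧ A.Nonempty},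
              ({t : LTree // labelsM t = A.1.val} ×
                {cs : List LTree // labelsListM cs = (s \ A.1).val})) := by
            infer_instance
          refine Finite.of_injective (fun x =>
            (⟨⟨(labels (headTree x.1)).toFinset,
                (forest_decomp hsne x.1 x.2).2.2.1,
                (forest_decomp hsne x.1 x.2).2.2.2.1⟩,
              ⟨headTree x.1, (forest_decomp hsne x.1 x.2).2.1⟩,
              ⟨tailF x.1, (forest_decomp hsne x.1 x.2).2.2.2.2⟩⟩ :
              Σ A : {A : Finset ℕ // A ⊆ s ∧ A.Nonempty},
              ({t : LTree // labelsM t = A.1.val} ×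
                {cs : List LTree // labelsListM cs = (s \ A.1).val}))) ?_
          intro x y h
          have h1 : headTree x.1 = headTree y.1 :=
            congrArg (fun (z : Σ A : {A : Finset ℕ // A ⊆ s ∧ A.Nonempty},
              ({t : LTree // labelsM t = A.1.val} ×
                {cs : List LTree // labelsListM cs = (s \ A.1).val})) => z.2.1.1) h
          have h2 : tailF x.1 = tailF y.1 :=
            congrArg (fun (z : Σ A : {A : Finset ℕ // A ⊆ s ∧ A.Nonempty},
              ({t : LTree // labelsM t = A.1.val} ×
                {cs : List LTree // labelsListM cs = (s \ A.1).val})) => z.2.2.1) h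
          apply Subtype.ext
          rw [(forest_decomp hsne x.1 x.2).1, (forest_decomp hsne y.1 y.2).1, h1, h2]

theorem finiteT (s : Finset ℕ) : Finite {t : LTree // labelsM t = s.val} :=
  (fin_aux (2 * s.card) s).1 le_rfl

theorem finiteF (s : Finset ℕ) : Finite {cs : List LTree // labelsListM cs = s.val} :=
  (fin_aux (2 * s.card + 1) s).2 le_rfl

end LTree

-- ==== part 4: card helpers, cntT basics ====

lemma card_sigma' {ι : Type*} [Fintype ι] (f : ι → Type*) [∀ i, Finite (f i)] :
    Nat.card (Σ i, f i) = ∑ i, Nat.card (f i) := by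
  classical
  letI : ∀ i, Fintype (f i) := fun i => Fintype.ofFinite (f i)
  simp [Nat.card_eq_fintype_card, Fintype.card_sigma]

lemma card_conv {X Y : Type*} [Finite X] [Finite Y] (f : X → ℕ) (g : Y → ℕ) (K : ℕ) :
    Nat.card {q : X × Y // f q.1 + g q.2 = K} =
      ∑ p ∈ Finset.HasAntidiagonal.antidiagonal K, Nat.card {x // f x = p.1} * Nat.card {y // g y = p.2} := by
  classical
  have e : {q : X × Y // f q.1 + g q.2 = K} ≃
      Σ p : ↥(Finset.HasAntidiagonal.antidiagonal K), ({x // f x = p.1.1} × {y // g y = p.1.2}) := by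
    refine Equiv.ofBijective (fun q =>
      ⟨⟨(f q.1.1, g q.1.2), Finset.HasAntidiagonal.mem_antidiagonal.2 q.2⟩,
        ⟨q.1.1, rfl⟩, ⟨q.1.2, rfl⟩⟩) ⟨?_, ?_⟩
    · intro q q' h
      have h1 : q.1.1 = q'.1.1 :=
        congrArg (fun (z : Σ p : ↥(Finset.HasAntidiagonal.antidiagonal K),
          ({x // f x = p.1.1} × {y // g y = p.1.2})) => z.2.1.1) h
      have h2 : q.1.2 = q'.1.2 :=
        congrArg (fun (z : Σ p : ↥(Finset.HasAntidiagonal.antidiagonal K),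
          ({x // f x = p.1.1} × {y // g y = p.1.2})) => z.2.2.1) h
      exact Subtype.ext (Prod.ext h1 h2)
    · rintro ⟨⟨⟨i, j⟩, hp⟩, ⟨x, hx⟩, ⟨y, hy⟩⟩
      have hx' : f x = i := hx
      have hy' : g y = j := hy
      subst hx'; subst hy'
      exact ⟨⟨(x, y), Finset.HasAntidiagonal.mem_antidiagonal.1 hp⟩, rfl⟩
  rw [Nat.card_congr e]
  haveI : ∀ p : ↥(Finset.HasAntidiagonal.antidiagonal K), Finite ({x // f x = p.1.1} × {y // g y = p.1.2}) :=
    fun p => by infer_instance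
  rw [card_sigma']
  rw [← Finset.sum_coe_sort (Finset.HasAntidiagonal.antidiagonal K)
    (fun p => Nat.card {x // f x = p.1} * Nat.card {y // g y = p.2})]
  exact Finset.sum_congr rfl (fun p _ => Nat.card_prod _ _)

namespace LTree

noncomputable def cntT (s : Finset ℕ) (k : ℕ) : ℕ :=
  Nat.card {t : LTree // labelsM t = s.val ∧ impr t = k}

lemma cntT_empty (k : ℕ) : cntT ∅ k = 0 := by
  have : IsEmpty {t : LTree // labelsM t = (∅ : Finset ℕ).val ∧ impr t = k} := by
    refine ⟨fun x => labelsM_ne_zero x.1 ?_⟩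
    have := x.2.1
    simpa using this
  rw [cntT]
  exact Nat.card_of_isEmpty

lemma impr_node_nil (a : ℕ) : impr (node a []) = 0 := by
  simp [impr, improperEdges, improperEdgesAux]

lemma eq_single {a : ℕ} {t : LTree} (h : labelsM t = ({a} : Finset ℕ).val) :
    t = node a [] := by
  rw [labelsM_eq] at h
  have hval : ({a} : Finset ℕ).val = (a ::ₘ 0) := rfl
  rw [hval] at h
  have hcard := congrArg Multiset.card h
  simp only [Multiset.card_cons, Multiset.card_zero] at hcard
  have hnil : labelsListM (children t) = 0 := by
    rw [← Multiset.card_eq_zero]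
    omega
  rw [hnil] at h
  have hroot : rootLabel t = a := by
    have := Multiset.mem_cons_self (rootLabel t) (0 : Multiset ℕ)
    rw [h] at this
    simpa using this
  have hcs : children t = [] := by
    have : labelsList (children t) = [] := by
      have := hnil
      simpa [labelsListM] using this
    exact labelsList_eq_nil.1 this
  rw [← node_eta t, hroot, hcs]

lemma cntT_singleton (a k : ℕ) : cntT {a} k = if k = 0 then 1 else 0 := by
  rw [cntT]
  have hlab : labelsM (node a []) = ({a} : Finset ℕ).val := by
    rw [labelsM_eq]
    rfl
  split_ifs with hk
  · subst hk
    haveI : Unique {t : LTree // labelsM t = ({a} : Finset ℕ).val ∧ impr t = 0} := by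
      refine ⟨⟨⟨node a [], hlab, impr_node_nil a⟩⟩, ?_⟩
      intro x
      apply Subtype.ext
      exact eq_single x.2.1
    exact Nat.card_unique
  · haveI : IsEmpty {t : LTree // labelsM t = ({a} : Finset ℕ).val ∧ impr t = k} := by
      refine ⟨fun x => ?_⟩
      have h1 := eq_single x.2.1
      have h2 := x.2.2
      rw [h1, impr_node_nil] at h2
      exact hk h2.symm
    exact Nat.card_of_isEmpty

end LTree

-- ==== part 5: the double factorial identity ====

/-- `bb i = (2i-1)!!` (with `bb 0 = 1` by ℕ-truncation). -/
def bb (i : ℕ) : ℕ := Nat.doubleFactorial (2 * i - 1)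

lemma bb_zero : bb 0 = 1 := rfl

lemma bb_one : bb 1 = 1 := rfl

lemma bb_succ (i : ℕ) : bb (i + 1) = (2 * i + 1) * bb i := by
  cases i with
  | zero => rfl
  | succ j =>
      show Nat.doubleFactorial (2 * (j + 2) - 1) = (2 * (j + 1) + 1) * Nat.doubleFactorial (2 * (j + 1) - 1)
      have e1 : 2 * (j + 2) - 1 = (2 * j + 1) + 2 := by omega
      have e2 : 2 * (j + 1) - 1 = 2 * j + 1 := by omega
      rw [e1, e2, Nat.doubleFactorial_add_two]
      congr 1

lemma idA (n : ℕ) (hn : 1 ≤ n) :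
    ∑ i ∈ Finset.range n, n.choose i * (bb i * bb (n - 1 - i)) = bb n := by
  induction n with
  | zero => omega
  | succ n ih =>
      rcases Nat.lt_or_ge n 1 with h1 | hn1
      · have : n = 0 := by omega
        subst this
        simp [bb]
      · have IH := ih hn1
        rw [Finset.sum_range_succ']
        have hterm : ∀ i ∈ Finset.range n,
            (n + 1).choose (i + 1) * (bb (i + 1) * bb (n + 1 - 1 - (i + 1))) =
              (2 * i + 1) * (n.choose i * (bb i * bb (n - 1 - i))) +
              (2 * i + 1) * (n.choose (i + 1) * (bb i * bb (n - 1 - i))) := by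
          intro i hi
          have e1 : n + 1 - 1 - (i + 1) = n - 1 - i := by omega
          rw [e1, Nat.choose_succ_succ, bb_succ]
          ring
        rw [Finset.sum_congr rfl hterm, Finset.sum_add_distrib]
        have hT2 : ∑ i ∈ Finset.range n, (2 * i + 1) * (n.choose (i + 1) * (bb i * bb (n - 1 - i)))
            = ∑ i ∈ Finset.range n,
                (2 * (n - 1 - i) + 1) * (n.choose i * (bb i * bb (n - 1 - i))) := by
          rw [← Finset.sum_range_reflect
            (fun i => (2 * i + 1) * (n.choose (i + 1) * (bb i * bb (n - 1 - i)))) n]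
          refine Finset.sum_congr rfl ?_
          intro i hi
          have hi' : i < n := Finset.mem_range.1 hi
          have e1 : (n - 1 - i) + 1 = n - i := by omega
          have e2 : n - 1 - (n - 1 - i) = i := by omega
          simp only [e1, e2]
          rw [Nat.choose_symm (by omega : i ≤ n)]
          ring
        rw [hT2]
        have hcomb : ∑ i ∈ Finset.range n, (2 * i + 1) * (n.choose i * (bb i * bb (n - 1 - i)))
            + ∑ i ∈ Finset.range n,
                (2 * (n - 1 - i) + 1) * (n.choose i * (bb i * bb (n - 1 - i)))
            = 2 * n * ∑ i ∈ Finset.range n, n.choose i * (bb i * bb (n - 1 - i)) := by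
          rw [← Finset.sum_add_distrib, Finset.mul_sum]
          refine Finset.sum_congr rfl ?_
          intro i hi
          have hi' : i < n := Finset.mem_range.1 hi
          have : (2 * i + 1) + (2 * (n - 1 - i) + 1) = 2 * n := by omega
          rw [← add_mul, this]
        rw [hcomb, IH]
        have hlast : (n + 1).choose 0 * (bb 0 * bb (n + 1 - 1 - 0)) = bb n := by
          simp [bb_zero]
        rw [hlast, bb_succ]
        ring

-- ==== part 6: decomposition ====
namespace LTree

noncomputable def innerCnt (M : ℕ) (s : Finset ℕ) (k : ℕ) (A : Finset ℕ) : ℕ :=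
  Nat.card {q : {c : LTree // labelsM c = A.val} × {t : LTree // labelsM t = (s \ A).val} //
    impr q.1.1 + impr q.2.1 + (if M ∈ A then 1 else 0) = k}

lemma prepend_inj {c₁ c₂ t₁ t₂ : LTree} (h : prepend c₁ t₁ = prepend c₂ t₂) :
    c₁ = c₂ ∧ t₁ = t₂ := by
  cases t₁ with
  | node a cs =>
    cases t₂ with
    | node a' cs' =>
        rw [prepend_node, prepend_node] at h
        injection h with h1 h2
        injection h2 with h3 h4
        exact ⟨h3, by rw [h1, h4]⟩

lemma cond_iff' {c t : LTree} {s : Finset ℕ} (hne : s.Nonempty)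
    (hlab : labelsM (prepend c t) = s.val) :
    (minLabel c < minOver (rootLabel t) (children t) ↔ s.min' hne ∈ labels c) := by
  refine cond_iff ?_ ?_ ?_
  · have : (labelsM (prepend c t)).Nodup := hlab ▸ s.nodup
    simpa [labelsM, Multiset.coe_nodup] using this
  · have h1 : s.min' hne ∈ s.val := (s.min'_mem hne)
    rw [← hlab] at h1
    simpa [labelsM, Multiset.mem_coe] using h1
  · intro y hy
    have h1 : y ∈ s.val := by
      rw [← hlab]
      simpa [labelsM, Multiset.mem_coe] using hy
    exact s.min'_le y h1

lemma cntT_eq_sum_inner (s : Finset ℕ) (hne : s.Nonempty) (hs : 2 ≤ s.card) (k : ℕ) :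
    cntT s k = ∑ A ∈ s.powerset, innerCnt (s.min' hne) s k A := by
  classical
  set M := s.min' hne with hM
  -- the big equivalence
  have e : (Σ A : ↥s.powerset,
      {q : {c : LTree // labelsM c = A.1.val} ×
           {t : LTree // labelsM t = (s \ A.1).val} //
        impr q.1.1 + impr q.2.1 + (if M ∈ A.1 then 1 else 0) = k}) ≃
      {t : LTree // labelsM t = s.val ∧ impr t = k} := by
    refine Equiv.ofBijective (fun x => ⟨prepend x.2.1.1.1 x.2.1.2.1, ?_, ?_⟩) ⟨?_, ?_⟩
    · -- labels
      rw [labelsM_prepend, x.2.1.1.2, x.2.1.2.2, Finset.sdiff_val,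
        add_tsub_cancel_of_le (Finset.val_le_iff.2 (Finset.mem_powerset.1 x.1.2))]
    · -- impr
      have hlab : labelsM (prepend x.2.1.1.1 x.2.1.2.1) = s.val := by
        rw [labelsM_prepend, x.2.1.1.2, x.2.1.2.2, Finset.sdiff_val,
          add_tsub_cancel_of_le (Finset.val_le_iff.2 (Finset.mem_powerset.1 x.1.2))]
      rw [impr_prepend]
      have hcond := cond_iff' hne hlab
      have hmem : (M ∈ labels x.2.1.1.1) ↔ M ∈ x.1.1 := by
        have h2 := x.2.1.1.2
        constructor
        · intro h
          have hmm : M ∈ labelsM x.2.1.1.1 := Multiset.mem_coe.2 h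
          rw [h2] at hmm
          exact Finset.mem_def.2 hmm
        · intro h
          have hmm : M ∈ labelsM x.2.1.1.1 := by
            rw [h2]; exact Finset.mem_def.1 h
          exact Multiset.mem_coe.1 hmm
      have hcnd : (if minLabel x.2.1.1.1 <
          minOver (rootLabel x.2.1.2.1) (children x.2.1.2.1) then 1 else 0) =
          (if M ∈ x.1.1 then 1 else 0) := if_congr (hcond.trans hmem) rfl rfl
      have hx := x.2.2
      rw [hcnd]
      omega
    · -- injective
      rintro ⟨A₁, ⟨⟨c₁, hc₁⟩, ⟨t₁, ht₁⟩⟩, hq₁⟩ ⟨A₂, ⟨⟨c₂, hc₂⟩, ⟨t₂, ht₂⟩⟩, hq₂⟩ h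
      have h0 : prepend c₁ t₁ = prepend c₂ t₂ := congrArg Subtype.val h
      obtain ⟨hc, ht⟩ := prepend_inj h0
      subst hc; subst ht
      have hA : A₁ = A₂ := by
        apply Subtype.ext
        apply Finset.val_injective
        rw [← hc₁, ← hc₂]
      subst hA
      rfl
    · -- surjective
      rintro ⟨t, hlab, himp⟩
      cases t with
      | node a cs0 =>
        cases cs0 with
        | nil =>
            exfalso
            have : Multiset.card (labelsM (node a [])) = s.card := by
              rw [hlab]; rfl
            rw [labelsM_eq] at this
            simp [children, labelsListM_nil] at this
            omega
        | cons c cs =>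
            have hpre : prepend c (node a cs) = node a (c :: cs) := rfl
            have hlab' : labelsM (prepend c (node a cs)) = s.val := by rw [hpre]; exact hlab
            rw [← hpre] at hlab himp
            rw [labelsM_prepend] at hlab
            -- A and its properties
            have hle : labelsM c ≤ s.val := hlab ▸ Multiset.le_add_right _ _
            have hnd : (labelsM c).Nodup := Multiset.nodup_of_le hle s.nodup
            have hA : ((labels c).toFinset).val = labelsM c := by
              have h' : (labels c).toFinset = (labelsM c).toFinset := rfl
              rw [h', Multiset.toFinset_val, Multiset.Nodup.dedup hnd]
            set A : Finset ℕ := (labels c).toFinset with hAdef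
            have hsub : A ⊆ s := by
              intro x hx
              rw [Finset.mem_def, hA] at hx
              exact Finset.mem_def.2 (Multiset.mem_of_le hle hx)
            have hBval : labelsM (node a cs) = (s \ A).val := by
              rw [Finset.sdiff_val, hA, ← hlab, add_tsub_cancel_left]
            have hcond := cond_iff' hne hlab'
            have hmem : (M ∈ labels c) ↔ M ∈ A := by
              simp [hAdef, List.mem_toFinset]
            have hcnd : (if minLabel c <
                minOver (rootLabel (node a cs)) (children (node a cs)) then 1 else 0) =
                (if M ∈ A then 1 else 0) := if_congr (hcond.trans hmem) rfl rfl
            refine ⟨⟨⟨A, Finset.mem_powerset.2 hsub⟩,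
              ⟨(⟨c, hA.symm⟩, ⟨node a cs, hBval⟩), ?_⟩⟩, ?_⟩
            · show impr c + impr (node a cs) + (if M ∈ A then 1 else 0) = k
              rw [impr_prepend] at himp
              rw [← hcnd]
              omega
            · apply Subtype.ext
              exact hpre
  -- cardinality bookkeeping
  haveI hfib : ∀ A : ↥s.powerset, Finite
      {q : {c : LTree // labelsM c = A.1.val} ×
           {t : LTree // labelsM t = (s \ A.1).val} //
        impr q.1.1 + impr q.2.1 + (if M ∈ A.1 then 1 else 0) = k} := by
    intro A
    haveI := finiteT A.1
    haveI := finiteT (s \ A.1)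
    infer_instance
  have h1 : cntT s k = Nat.card (Σ A : ↥s.powerset,
      {q : {c : LTree // labelsM c = A.1.val} ×
           {t : LTree // labelsM t = (s \ A.1).val} //
        impr q.1.1 + impr q.2.1 + (if M ∈ A.1 then 1 else 0) = k}) :=
    (Nat.card_congr e).symm
  rw [h1, card_sigma']
  rw [← Finset.sum_coe_sort s.powerset (fun A => innerCnt M s k A)]
  rfl

end LTree

-- ==== part 7: evaluation of innerCnt and the master formula ====
namespace LTree

lemma conv_eval {A B : Finset ℕ} {a b : ℕ}
    (hA : ∀ i, cntT A i = a.choose i * bb a)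
    (hB : ∀ i, cntT B i = b.choose i * bb b) (K : ℕ) :
    Nat.card {q : {c : LTree // labelsM c = A.val} × {t : LTree // labelsM t = B.val} //
      impr q.1.1 + impr q.2.1 = K} = bb a * bb b * (a + b).choose K := by
  classical
  haveI := finiteT A
  haveI := finiteT B
  rw [card_conv (fun c : {c : LTree // labelsM c = A.val} => impr c.1)
      (fun t : {t : LTree // labelsM t = B.val} => impr t.1) K]
  rw [Nat.add_choose_eq, Finset.mul_sum]
  refine Finset.sum_congr rfl ?_
  intro p hp
  have e1 : Nat.card {x : {c : LTree // labelsM c = A.val} // impr x.1 = p.1} = cntT A p.1 :=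
    Nat.card_congr (Equiv.subtypeSubtypeEquivSubtypeInter
      (fun c : LTree => labelsM c = A.val) (fun t => impr t = p.1))
  have e2 : Nat.card {y : {t : LTree // labelsM t = B.val} // impr y.1 = p.2} = cntT B p.2 :=
    Nat.card_congr (Equiv.subtypeSubtypeEquivSubtypeInter
      (fun t : LTree => labelsM t = B.val) (fun t => impr t = p.2))
  rw [e1, e2, hA p.1, hB p.2]
  ring

lemma innerCnt_eval (M : ℕ) (s : Finset ℕ) (k : ℕ) (A : Finset ℕ) {a b : ℕ}
    (hA : ∀ i, cntT A i = a.choose i * bb a)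
    (hB : ∀ i, cntT (s \ A) i = b.choose i * bb b) :
    innerCnt M s k A =
      if M ∈ A then (if k = 0 then 0 else bb a * bb b * (a + b).choose (k - 1))
      else bb a * bb b * (a + b).choose k := by
  classical
  haveI := finiteT A
  haveI := finiteT (s \ A)
  rw [innerCnt]
  by_cases h1 : M ∈ A
  · have e : {q : {c : LTree // labelsM c = A.val} ×
        {t : LTree // labelsM t = (s \ A).val} //
        impr q.1.1 + impr q.2.1 + (if M ∈ A then 1 else 0) = k} ≃
        {q : {c : LTree // labelsM c = A.val} ×
        {t : LTree // labelsM t = (s \ A).val} //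
        impr q.1.1 + impr q.2.1 + 1 = k} :=
      Equiv.subtypeEquivRight (fun q => by rw [if_pos h1])
    rw [Nat.card_congr e, if_pos h1]
    by_cases h2 : k = 0
    · rw [if_pos h2]
      subst h2
      haveI : IsEmpty {q : {c : LTree // labelsM c = A.val} ×
          {t : LTree // labelsM t = (s \ A).val} //
          impr q.1.1 + impr q.2.1 + 1 = 0} :=
        ⟨fun q => absurd q.2 (by omega)⟩
      exact Nat.card_of_isEmpty
    · rw [if_neg h2]
      have e2 : {q : {c : LTree // labelsM c = A.val} ×
          {t : LTree // labelsM t = (s \ A).val} //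
          impr q.1.1 + impr q.2.1 + 1 = k} ≃
          {q : {c : LTree // labelsM c = A.val} ×
          {t : LTree // labelsM t = (s \ A).val} //
          impr q.1.1 + impr q.2.1 = k - 1} :=
        Equiv.subtypeEquivRight (fun q => by omega)
      rw [Nat.card_congr e2, conv_eval hA hB]
  · have e : {q : {c : LTree // labelsM c = A.val} ×
        {t : LTree // labelsM t = (s \ A).val} //
        impr q.1.1 + impr q.2.1 + (if M ∈ A then 1 else 0) = k} ≃
        {q : {c : LTree // labelsM c = A.val} ×
        {t : LTree // labelsM t = (s \ A).val} //
        impr q.1.1 + impr q.2.1 = k} :=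
      Equiv.subtypeEquivRight (fun q => by rw [if_neg h1]; omega)
    rw [Nat.card_congr e, if_neg h1, conv_eval hA hB]

lemma innerCnt_empty (M : ℕ) (s : Finset ℕ) (k : ℕ) : innerCnt M s k ∅ = 0 := by
  rw [innerCnt]
  haveI : IsEmpty {q : {c : LTree // labelsM c = (∅ : Finset ℕ).val} ×
      {t : LTree // labelsM t = (s \ ∅).val} //
      impr q.1.1 + impr q.2.1 + (if M ∈ (∅ : Finset ℕ) then 1 else 0) = k} := by
    refine ⟨fun q => ?_⟩
    exact labelsM_ne_zero q.1.1.1 (by simpa using q.1.1.2)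
  exact Nat.card_of_isEmpty

lemma innerCnt_self (M : ℕ) (s : Finset ℕ) (k : ℕ) : innerCnt M s k s = 0 := by
  rw [innerCnt]
  haveI : IsEmpty {q : {c : LTree // labelsM c = s.val} ×
      {t : LTree // labelsM t = (s \ s).val} //
      impr q.1.1 + impr q.2.1 + (if M ∈ s then 1 else 0) = k} := by
    refine ⟨fun q => ?_⟩
    refine labelsM_ne_zero q.1.2.1 ?_
    rw [q.1.2.2]
    show (s \ s).val = 0
    rw [Finset.sdiff_self]
    rfl
  exact Nat.card_of_isEmpty

-- counting subsets of given size by membership of a fixed element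
lemma filter_not_mem_powersetCard (s : Finset ℕ) (M : ℕ) (j : ℕ) :
    (Finset.powersetCard j s).filter (fun A => M ∉ A) =
      Finset.powersetCard j (s.erase M) := by
  ext A
  simp only [Finset.mem_filter, Finset.mem_powersetCard, Finset.subset_erase]
  tauto

lemma card_filter_not_mem (s : Finset ℕ) (M : ℕ) (j : ℕ) (hM : M ∈ s) :
    ((Finset.powersetCard j s).filter (fun A => M ∉ A)).card = (s.card - 1).choose j := by
  rw [filter_not_mem_powersetCard, Finset.card_powersetCard, Finset.card_erase_of_mem hM]

lemma card_filter_mem (s : Finset ℕ) (M : ℕ) (j : ℕ) (hM : M ∈ s) (hj : 1 ≤ j) :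
    ((Finset.powersetCard j s).filter (fun A => M ∈ A)).card = (s.card - 1).choose (j - 1) := by
  classical
  have h1 := Finset.card_filter_add_card_filter_not
    (s := Finset.powersetCard j s) (p := fun A => M ∈ A)
  rw [Finset.card_powersetCard] at h1
  have h2 := card_filter_not_mem s M j hM
  have hcard : 1 ≤ s.card := Finset.card_pos.2 ⟨M, hM⟩
  -- Pascal
  obtain ⟨m', hm'⟩ : ∃ m', s.card = m' + 1 := ⟨s.card - 1, by omega⟩
  obtain ⟨j', hj'⟩ : ∃ j', j = j' + 1 := ⟨j - 1, by omega⟩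
  have hp2 : s.card.choose j = (s.card - 1).choose (j - 1) + (s.card - 1).choose j := by
    rw [hm', hj']
    simpa using Nat.choose_succ_succ m' j'
  omega

lemma idB (n : ℕ) (hn : 1 ≤ n) :
    ∑ i ∈ Finset.range n, n.choose (i + 1) * (bb i * bb (n - 1 - i)) = bb n := by
  rw [← Finset.sum_range_reflect]
  rw [← idA n hn]
  refine Finset.sum_congr rfl ?_
  intro i hi
  have hi' : i < n := Finset.mem_range.1 hi
  have e1 : (n - 1 - i) + 1 = n - i := by omega
  have e2 : n - 1 - (n - 1 - i) = i := by omega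
  rw [e1, e2, Nat.choose_symm (by omega : i ≤ n)]
  ring

end LTree

-- ==== part 8: master formula ====
namespace LTree

theorem cntT_formula : ∀ (m : ℕ) (s : Finset ℕ), s.card = m → s.Nonempty → ∀ k,
    cntT s k = (s.card - 1).choose k * bb (s.card - 1) := by
  intro m
  induction m using Nat.strong_induction_on with
  | _ m IH =>
    intro s hm hne k
    rcases Nat.lt_or_ge m 2 with h2 | h2
    · -- singleton case
      have hm1 : s.card = 1 := by
        have := Finset.card_pos.2 hne; omega
      obtain ⟨a, rfl⟩ := Finset.card_eq_one.1 hm1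
      rw [cntT_singleton, Finset.card_singleton]
      cases k with
      | zero => simp [bb_zero]
      | succ k => simp
    · -- recurrence
      have h2' : 2 ≤ s.card := by omega
      rw [cntT_eq_sum_inner s hne h2' k]
      have hMs : s.min' hne ∈ s := s.min'_mem hne
      set M := s.min' hne with hMdef
      rw [Finset.sum_powerset]
      set n := s.card - 1 with hn
      have hn1 : 1 ≤ n := by omega
      have hsc : s.card = n + 1 := by omega
      -- middle terms
      have gval : ∀ j, 1 ≤ j → j ≤ n →
          ∑ A ∈ Finset.powersetCard j s, innerCnt M s k A =
            n.choose (j-1) * ((if k = 0 then 0 else (n-1).choose (k-1)) *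
              (bb (j-1) * bb (n - 1 - (j-1)))) +
            n.choose j * ((n-1).choose k * (bb (j-1) * bb (n - 1 - (j-1)))) := by
        intro j hj1 hj2
        have hinner : ∀ A ∈ Finset.powersetCard j s,
            innerCnt M s k A = (if M ∈ A then (if k = 0 then 0 else
              (n-1).choose (k-1) * (bb (j-1) * bb (n - 1 - (j-1))))
              else (n-1).choose k * (bb (j-1) * bb (n - 1 - (j-1)))) := by
          intro A hA
          obtain ⟨hsub, hAcard⟩ := Finset.mem_powersetCard.1 hA
          have hAne : A.Nonempty := Finset.card_pos.1 (by omega)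
          have hBcard : (s \ A).card = s.card - j := by
            rw [Finset.card_sdiff_of_subset hsub, hAcard]
          have hBne : (s \ A).Nonempty := Finset.card_pos.1 (by omega)
          have hAj : ∀ i, cntT A i = (j-1).choose i * bb (j-1) := by
            intro i
            have h := IH A.card (by omega) A rfl hAne i
            rwa [hAcard] at h
          have hBj : ∀ i, cntT (s \ A) i = (n - 1 - (j-1)).choose i * bb (n - 1 - (j-1)) := by
            intro i
            have h := IH (s \ A).card (by omega) (s \ A) rfl hBne i
            have he : (s \ A).card - 1 = n - 1 - (j - 1) := by omega
            rwa [he] at h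
          have h := innerCnt_eval M s k A hAj hBj
          rw [h]
          have he2 : (j - 1) + (n - 1 - (j-1)) = n - 1 := by omega
          rw [he2]
          by_cases hM : M ∈ A
          · rw [if_pos hM, if_pos hM]
            by_cases hk : k = 0
            · rw [if_pos hk, if_pos hk]
            · rw [if_neg hk, if_neg hk]
              ring
          · rw [if_neg hM, if_neg hM]
            ring
        rw [Finset.sum_congr rfl hinner]
        rw [← Finset.sum_filter_add_sum_filter_not (Finset.powersetCard j s) (fun A => M ∈ A)]
        have hs1 : ∑ A ∈ (Finset.powersetCard j s).filter (fun A => M ∈ A),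
            (if M ∈ A then (if k = 0 then 0 else
              (n-1).choose (k-1) * (bb (j-1) * bb (n - 1 - (j-1))))
              else (n-1).choose k * (bb (j-1) * bb (n - 1 - (j-1)))) =
            n.choose (j-1) * ((if k = 0 then 0 else (n-1).choose (k-1)) *
              (bb (j-1) * bb (n - 1 - (j-1)))) := by
          rw [Finset.sum_congr rfl
            (fun A hA => if_pos (Finset.mem_filter.1 hA).2), Finset.sum_const,
            card_filter_mem s M j hMs hj1, smul_eq_mul]
          have : s.card - 1 = n := rfl
          rw [this]
          by_cases hk : k = 0
          · rw [if_pos hk, if_pos hk]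
            ring
          · rw [if_neg hk, if_neg hk]
        have hs2 : ∑ A ∈ (Finset.powersetCard j s).filter (fun A => ¬ M ∈ A),
            (if M ∈ A then (if k = 0 then 0 else
              (n-1).choose (k-1) * (bb (j-1) * bb (n - 1 - (j-1))))
              else (n-1).choose k * (bb (j-1) * bb (n - 1 - (j-1)))) =
            n.choose j * ((n-1).choose k * (bb (j-1) * bb (n - 1 - (j-1)))) := by
          rw [Finset.sum_congr rfl
            (fun A hA => if_neg (Finset.mem_filter.1 hA).2), Finset.sum_const,
            card_filter_not_mem s M j hMs, smul_eq_mul]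
        rw [hs1, hs2]
      -- first and last terms vanish
      have g0 : ∑ A ∈ Finset.powersetCard 0 s, innerCnt M s k A = 0 := by
        rw [Finset.powersetCard_zero, Finset.sum_singleton, innerCnt_empty]
      have gm : ∑ A ∈ Finset.powersetCard s.card s, innerCnt M s k A = 0 := by
        rw [Finset.powersetCard_self, Finset.sum_singleton, innerCnt_self]
      -- assemble
      rw [hsc]
      rw [Finset.sum_range_succ]
      have hlast : ∑ A ∈ Finset.powersetCard (n+1) s, innerCnt M s k A = 0 := by
        rw [hsc] at gm
        exact gm
      rw [hlast, add_zero, Finset.sum_range_succ']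
      rw [g0, add_zero]
      have hmid : ∀ i ∈ Finset.range n,
          ∑ A ∈ Finset.powersetCard (i+1) s, innerCnt M s k A =
            (if k = 0 then 0 else (n-1).choose (k-1)) *
              (n.choose i * (bb i * bb (n - 1 - i))) +
            (n-1).choose k * (n.choose (i+1) * (bb i * bb (n - 1 - i))) := by
        intro i hi
        have hi' : i < n := Finset.mem_range.1 hi
        have h := gval (i+1) (by omega) (by omega)
        simp only [Nat.add_sub_cancel] at h
        rw [h]
        ring
      rw [Finset.sum_congr rfl hmid, Finset.sum_add_distrib, ← Finset.mul_sum, ← Finset.mul_sum]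
      rw [idA n hn1, idB n hn1]
      -- final Pascal step
      cases k with
      | zero =>
          simp
      | succ k =>
          rw [if_neg (Nat.succ_ne_zero k)]
          have : n.choose (k+1) = (n-1).choose k + (n-1).choose (k+1) := by
            obtain ⟨n', hn'⟩ : ∃ n', n = n' + 1 := ⟨n - 1, by omega⟩
            rw [hn']
            simpa using Nat.choose_succ_succ n' k
          rw [Nat.succ_sub_one, this]
          ring

end LTree

open Nat

/-- For every `n ≥ 1` and `0 ≤ k ≤ n`, the number of labeled plane trees with `n`
edges having exactly `k` improper edges equals `binom(n,k) · (2n-1)!!`. -/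
theorem card_planeTrees_with_k_improper (n k : ℕ) (hn : 1 ≤ n) (hk : k ≤ n) :
    Nat.card {T : LTree // LTree.IsLPT n T ∧ LTree.impr T = k}
      = n.choose k * (2 * n - 1)‼ := by
  classical
  have hnd : (List.range' 1 (n + 1)).Nodup := List.nodup_range'
  set s : Finset ℕ := ⟨(List.range' 1 (n + 1) : List ℕ), by
    exact (Multiset.coe_nodup).2 hnd⟩ with hs
  have hcard : s.card = n + 1 := by
    show Multiset.card _ = n + 1
    simp [hs, List.length_range']
  have e : {T : LTree // LTree.IsLPT n T ∧ LTree.impr T = k} ≃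
      {T : LTree // LTree.labelsM T = s.val ∧ LTree.impr T = k} := by
    refine Equiv.subtypeEquivRight ?_
    intro T
    have : LTree.IsLPT n T ↔ LTree.labelsM T = s.val := by
      rw [LTree.IsLPT, LTree.labelsM]
      exact (Multiset.coe_eq_coe).symm
    rw [this]
  rw [Nat.card_congr e]
  have hne : s.Nonempty := Finset.card_pos.1 (by omega)
  have h := LTree.cntT_formula (n + 1) s hcard hne k
  rw [LTree.cntT] at h
  rw [h, hcard]
  simp only [Nat.add_sub_cancel]
  rfl
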